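/- In the local setting, assume L/K is ramified, i.e. the maximal ideal of A generates the square of the maximal ideal of B. Then σ induces the identity on the residue field F = B/πB (which coincides with the residue field of A), and for every square-free B-lattice Λ in (V,H), the map (ℓ + πΛ*, m + πΛ*) ↦ H(ℓ,m) + πB is a well-defined nondegenerate symmetric F-bilinear form on the F-vector space Λ/πΛ*. -/

import Mathlib

/-- The dual lattice of a lattice `Λ` (given as a set) with respect to a Hermitian form `H`. -/
def hermDual (B : Type) {L V : Type} [CommRing B] [Field L] [Algebra B L]
    [AddCommGroup V] [Module L V] (H : V → V → L) (Λ : Set V) : Set V :=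
  {v : V | ∀ m ∈ Λ, ∃ b : B, algebraMap B L b = H v m}

/-- In the ramified local situation, `σ` induces the identity on the residue
field `F = B/πB` (which coincides with the residue field of `A`), and for a square-free
lattice `Λ` the form `H` induces a well-defined nondegenerate symmetric `F`-bilinear form
on `Λ/πΛ*` (stated on representatives). -/
theorem ramified_induced_symmetric_form
    {A K L B : Type}
    [CommRing A] [IsDomain A] [IsDiscreteValuationRing A] [CharZero A]
    [IsAdicComplete (IsLocalRing.maximalIdeal A) A]
    [Field K] [Algebra A K] [IsFractionRing A K]
    [Field L] [Algebra K L] [Algebra.IsSeparable K L]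
    (hquad : Module.finrank K L = 2)
    (σ : L ≃ₐ[K] L) (hσne : σ ≠ AlgEquiv.refl) (hσ2 : ∀ x : L, σ (σ x) = x)
    [CommRing B] [IsDomain B] [IsDiscreteValuationRing B]
    [Algebra A B] [Algebra B L] [Algebra A L]
    [IsScalarTower A B L] [IsScalarTower A K L]
    [IsIntegralClosure B A L]
    (hσB : ∀ b : B, ∃ b' : B, σ (algebraMap B L b) = algebraMap B L b')
    (π : B) (hπ : Ideal.span {π} = IsLocalRing.maximalIdeal B)
    -- L/K is ramified: the maximal ideal of A generates the square of the maximal ideal of B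
    (hram : Ideal.map (algebraMap A B) (IsLocalRing.maximalIdeal A) =
      (IsLocalRing.maximalIdeal B) ^ 2)
    {V : Type} [AddCommGroup V] [Module L V] [FiniteDimensional L V]
    [Module B V] [IsScalarTower B L V]
    (H : V → V → L)
    (haddl : ∀ v v' w : V, H (v + v') w = H v w + H v' w)
    (haddr : ∀ v w w' : V, H v (w + w') = H v w + H v w')
    (hsmul : ∀ (a : L) (v w : V), H (a • v) w = a * H v w)
    (hherm : ∀ v w : V, H v w = σ (H w v))
    (hnd : ∀ v : V, (∀ w : V, H v w = 0) → v = 0) :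
    -- σ induces the identity on F = B/πB
    (∀ b b' : B, σ (algebraMap B L b) = algebraMap B L b' →
      b' - b ∈ Ideal.span {π}) ∧
    -- F coincides with the residue field of A
    Function.Surjective
      (fun a : A => Ideal.Quotient.mk (Ideal.span {π}) (algebraMap A B a)) ∧
    -- for every square-free lattice Λ, `(ℓ + πΛ*, m + πΛ*) ↦ H(ℓ,m) + πB` is a
    -- well-defined nondegenerate symmetric F-bilinear form on Λ/πΛ*
    (∀ Λ : Submodule B V, Λ.FG → Submodule.span L (Λ : Set V) = ⊤ →
      (Λ : Set V) ⊆ hermDual B H (Λ : Set V) →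
      (∀ v ∈ hermDual B H (Λ : Set V), π • v ∈ Λ) →
      ((∀ ℓ ∈ Λ, ∀ m ∈ Λ, ∃ b : B, algebraMap B L b = H ℓ m) ∧
        (∀ ℓ ℓ' m m' : V, ℓ ∈ Λ → ℓ' ∈ Λ → m ∈ Λ → m' ∈ Λ →
          (∃ u ∈ hermDual B H (Λ : Set V), ℓ - ℓ' = π • u) →
          (∃ u ∈ hermDual B H (Λ : Set V), m - m' = π • u) →
          ∃ b : B, algebraMap B L (π * b) = H ℓ m - H ℓ' m') ∧
        (∀ ℓ ∈ Λ, ∀ m ∈ Λ, ∃ b : B, algebraMap B L (π * b) = H ℓ m - H m ℓ) ∧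
        (∀ (b : B) (ℓ : V), ℓ ∈ Λ → ∀ m ∈ Λ,
          ∃ c : B, algebraMap B L (π * c) = H (b • ℓ) m - algebraMap B L b * H ℓ m) ∧
        (∀ ℓ ∈ Λ, (∀ m ∈ Λ, ∃ b : B, algebraMap B L (π * b) = H ℓ m) →
          ∃ u ∈ hermDual B H (Λ : Set V), ℓ = π • u))) := by
  classical
  -- basic facts
  have hBL : Function.Injective (algebraMap B L) :=
    IsIntegralClosure.algebraMap_injective B A L
  haveI hKL : FiniteDimensional K L := Module.finite_of_finrank_eq_succ hquad
  haveI hfinAB : Module.Finite A B := IsIntegralClosure.finite A K L B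
  haveI hfrac : IsFractionRing B L :=
    IsIntegralClosure.isFractionRing_of_finite_extension A K L B
  have hπmemB : π ∈ IsLocalRing.maximalIdeal B := by
    rw [← hπ]; exact Ideal.mem_span_singleton_self π
  have hπnu : ¬ IsUnit π := hπmemB
  have hπne : π ≠ 0 := by
    intro h
    exact IsDiscreteValuationRing.not_a_field B (by rw [← hπ, h, Ideal.span_singleton_eq_bot])
  have hπsq : π ∉ (IsLocalRing.maximalIdeal B) ^ 2 := by
    rw [← hπ, Ideal.span_singleton_pow, Ideal.mem_span_singleton]
    rintro ⟨c, hc⟩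
    apply hπnu
    have h1 : π * (π * c) = π * 1 := by linear_combination -hc
    exact IsUnit.of_mul_eq_one (a := π) c (by simpa using mul_left_cancel₀ hπne h1)
  -- the conjugation on B
  choose τ hτ using hσB
  have hτeq : ∀ b c : B, σ (algebraMap B L b) = algebraMap B L c → τ b = c := by
    intro b c h
    exact hBL ((hτ b).symm.trans h)
  have hτmul : ∀ b c : B, τ (b * c) = τ b * τ c := by
    intro b c
    apply hτeq
    rw [map_mul, map_mul, map_mul, hτ, hτ]
  have hτone : τ 1 = 1 := by apply hτeq; simp
  have hτunit : ∀ b : B, IsUnit b → IsUnit (τ b) := by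
    rintro b ⟨u, rfl⟩
    refine IsUnit.of_mul_eq_one (τ ((u⁻¹ : Bˣ) : B)) ?_
    rw [← hτmul, Units.mul_inv, hτone]
  have hττ : ∀ b : B, τ (τ b) = b := by
    intro b
    apply hτeq
    rw [← hτ, hσ2]
  have hτπ : τ π ∈ Ideal.span {π} := by
    rw [hπ]
    intro h
    exact hπnu (by simpa [hττ] using hτunit _ h)
  obtain ⟨d, hd⟩ : π ∣ τ π := Ideal.mem_span_singleton.mp hτπ
  -- surjectivity of A → B/π
  have hsurj : Function.Surjective
      (fun a : A => Ideal.Quotient.mk (Ideal.span {π}) (algebraMap A B a)) := by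
    set p := IsLocalRing.maximalIdeal A with hp
    set I := Ideal.map (algebraMap A B) p with hIdef
    letI := Ideal.Quotient.field p
    have hdim : Module.finrank (A ⧸ p) (B ⧸ I) = 2 := by
      rw [Ideal.finrank_quotient_map p K L, hquad]
    haveI hfin2 : Module.Finite A (B ⧸ I) :=
      Module.Finite.of_surjective (IsScalarTower.toAlgHom A B (B ⧸ I)).toLinearMap
        Ideal.Quotient.mk_surjective
    haveI hfinF : Module.Finite (A ⧸ p) (B ⧸ I) :=
      Module.Finite.of_restrictScalars_finite A _ _
    have hIle : I ≤ IsLocalRing.maximalIdeal B := by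
      rw [hram]; exact Ideal.pow_le_self two_ne_zero
    have hkey : ∀ a b : A, algebraMap A B a + algebraMap A B b * π ∈ I → a ∈ p ∧ b ∈ p := by
      intro a b h
      have hamem : algebraMap A B a ∈ IsLocalRing.maximalIdeal B := by
        have h2 : algebraMap A B b * π ∈ IsLocalRing.maximalIdeal B :=
          Ideal.mul_mem_left _ _ hπmemB
        have := (IsLocalRing.maximalIdeal B).sub_mem (hIle h) h2
        simpa using this
      have ha : a ∈ p := by
        by_contra hna
        have : IsUnit a := by
          by_contra hnu; exact hna hnu
        exact hamem (this.map (algebraMap A B))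
      refine ⟨ha, ?_⟩
      have haI : algebraMap A B a ∈ I := Ideal.mem_map_of_mem _ ha
      have hbπ : algebraMap A B b * π ∈ I := by
        have := I.sub_mem h haI
        simpa using this
      by_contra hnb
      have hub : IsUnit (algebraMap A B b) := by
        have : IsUnit b := by by_contra hnu; exact hnb hnu
        exact this.map _
      apply hπsq
      rw [← hram]
      obtain ⟨v, hv⟩ := hub.exists_left_inv
      have h2 := I.mul_mem_left v hbπ
      have h3 : v * (algebraMap A B b * π) = π := by
        rw [← mul_assoc, hv, one_mul]
      rwa [h3] at h2
    have hli : LinearIndependent (A ⧸ p)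
        ![Ideal.Quotient.mk I 1, Ideal.Quotient.mk I π] := by
      rw [LinearIndependent.pair_iff]
      intro s t hst
      obtain ⟨a, rfl⟩ := Ideal.Quotient.mk_surjective s
      obtain ⟨b, rfl⟩ := Ideal.Quotient.mk_surjective t
      rw [Ideal.Quotient.mk_smul_mk_quotient_map_quotient,
        Ideal.Quotient.mk_smul_mk_quotient_map_quotient, ← map_add,
        Ideal.Quotient.eq_zero_iff_mem, mul_one] at hst
      obtain ⟨ha, hb⟩ := hkey a b hst
      exact ⟨Ideal.Quotient.eq_zero_iff_mem.mpr ha, Ideal.Quotient.eq_zero_iff_mem.mpr hb⟩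
    have hspan : Submodule.span (A ⧸ p)
        (Set.range ![Ideal.Quotient.mk I 1, Ideal.Quotient.mk I π]) = ⊤ := by
      apply Submodule.eq_top_of_finrank_eq
      rw [finrank_span_eq_card hli, hdim, Fintype.card_fin]
    intro y
    obtain ⟨x, rfl⟩ := Ideal.Quotient.mk_surjective y
    have hx : Ideal.Quotient.mk I x ∈ Submodule.span (A ⧸ p)
        (Set.range ![Ideal.Quotient.mk I 1, Ideal.Quotient.mk I π]) := by
      rw [hspan]; trivial
    rw [Submodule.mem_span_range_iff_exists_fun] at hx
    obtain ⟨c, hc⟩ := hx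
    obtain ⟨a, ha⟩ := Ideal.Quotient.mk_surjective (c 0)
    obtain ⟨b, hb⟩ := Ideal.Quotient.mk_surjective (c 1)
    rw [Fin.sum_univ_two] at hc
    simp only [Matrix.cons_val_zero, Matrix.cons_val_one, Matrix.head_cons] at hc
    rw [← ha, ← hb, Ideal.Quotient.mk_smul_mk_quotient_map_quotient,
      Ideal.Quotient.mk_smul_mk_quotient_map_quotient, ← map_add] at hc
    have hsub : algebraMap A B a * 1 + algebraMap A B b * π - x ∈ I :=
      (Ideal.Quotient.mk_eq_mk_iff_sub_mem _ _).mp hc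
    refine ⟨a, ?_⟩
    rw [Ideal.Quotient.mk_eq_mk_iff_sub_mem]
    have h1 : algebraMap A B a - x =
        (algebraMap A B a * 1 + algebraMap A B b * π - x) - algebraMap A B b * π := by ring
    rw [h1]
    refine Submodule.sub_mem _ ?_ (Ideal.mul_mem_left _ _ (Ideal.mem_span_singleton_self π))
    rw [hπ]
    exact hIle hsub
  -- σ induces the identity on B/π
  have hid : ∀ b b' : B, σ (algebraMap B L b) = algebraMap B L b' →
      b' - b ∈ Ideal.span {π} := by
    intro b b' hbb'
    obtain ⟨a, ha⟩ := hsurj (Ideal.Quotient.mk (Ideal.span {π}) b)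
    have hsub : algebraMap A B a - b ∈ Ideal.span {π} :=
      (Ideal.Quotient.mk_eq_mk_iff_sub_mem _ _).mp ha
    obtain ⟨c, hcc⟩ := Ideal.mem_span_singleton.mp hsub
    have hb : b = algebraMap A B a - π * c := by
      have := hcc; linear_combination -this
    have hσb : σ (algebraMap B L b) = algebraMap B L (algebraMap A B a - τ π * τ c) := by
      have h1 : algebraMap B L (algebraMap A B a) = algebraMap K L (algebraMap A K a) := by
        rw [← IsScalarTower.algebraMap_apply, IsScalarTower.algebraMap_apply A K L]
      rw [hb, map_sub, map_mul, map_sub σ, map_mul σ, hτ π, hτ c, h1, AlgEquiv.commutes,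
        map_sub, map_mul, h1]
    have : b' = algebraMap A B a - τ π * τ c := hBL (hbb'.symm.trans hσb)
    rw [this, hb, hd]
    rw [Ideal.mem_span_singleton]
    exact ⟨c - d * τ c, by ring⟩
  refine ⟨hid, hsurj, ?_⟩
  intro Λ _ _ hsub hsf
  have hBsmul : ∀ (b : B) (v : V), b • v = algebraMap B L b • v := by
    intro b v
    rw [IsScalarTower.algebraMap_smul]
  have hπL : algebraMap B L π ≠ 0 := fun h => hπne (hBL (h.trans (map_zero _).symm))
  refine ⟨?_, ?_, ?_, ?_, ?_⟩
  · exact fun ℓ hℓ m hm => hsub hℓ m hm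
  · rintro ℓ ℓ' m m' hℓ hℓ' hm hm' ⟨u, hu, hℓu⟩ ⟨w, hw, hmw⟩
    obtain ⟨b₁, hb₁⟩ := hu m hm
    obtain ⟨b₂, hb₂⟩ := hw ℓ' hℓ'
    have e1 : H ℓ m - H ℓ' m = algebraMap B L (π * b₁) := by
      have h1 : H ℓ m = H (ℓ - ℓ') m + H ℓ' m := by
        rw [← haddl, sub_add_cancel]
      rw [h1, hℓu, hBsmul, hsmul, ← hb₁, map_mul]; ring
    have e2 : H ℓ' m - H ℓ' m' = algebraMap B L (π * (d * τ b₂)) := by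
      have h1 : H ℓ' m = H ℓ' (m - m') + H ℓ' m' := by
        rw [← haddr, sub_add_cancel]
      have h2 : H ℓ' (m - m') = σ (H (m - m') ℓ') := hherm _ _
      have h3 : H (m - m') ℓ' = algebraMap B L (π * b₂) := by
        rw [hmw, hBsmul, hsmul, ← hb₂, map_mul]
      have h4 : σ (algebraMap B L (π * b₂)) = algebraMap B L (τ (π * b₂)) := hτ _
      have h5 : τ (π * b₂) = π * (d * τ b₂) := by
        rw [hτmul]
        rw [hd]; ring
      rw [h1, h2, h3, h4, h5]; ring
    refine ⟨b₁ + d * τ b₂, ?_⟩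
    rw [mul_add, map_add]
    rw [← e1, ← e2]; ring
  · intro ℓ hℓ m hm
    obtain ⟨b, hb⟩ := hsub hℓ m hm
    have h1 : H m ℓ = algebraMap B L (τ b) := by
      rw [hherm m ℓ, ← hb, hτ]
    obtain ⟨c, hc⟩ := Ideal.mem_span_singleton.mp (hid b (τ b) (hτ b))
    refine ⟨-c, ?_⟩
    rw [← hb, h1]
    have : τ b = b + π * c := by linear_combination hc
    rw [this, map_add, map_mul, map_mul, map_neg]; ring
  · intro b ℓ hℓ m hm
    refine ⟨0, ?_⟩
    rw [hBsmul, hsmul, mul_zero, map_zero]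
    ring
  · intro ℓ hℓ hπb
    refine ⟨(algebraMap B L π)⁻¹ • ℓ, ?_, ?_⟩
    · intro m hm
      obtain ⟨b, hb⟩ := hπb m hm
      refine ⟨b, ?_⟩
      rw [hsmul, ← hb, map_mul]
      field_simp
    · rw [hBsmul π, smul_smul, mul_inv_cancel₀ hπL, one_smul]
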